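/- Let A be a finite subset of a commutative group, K = |A+A|/|A|, and X ⊆ A nonempty minimizing |X+A|/|X| over nonempty subsets of A. For all positive integers λ₁, λ₂: |A + (λ₁λ₂)·A| ≤ |A + λ₁·X|·|X + λ₂·A|/|X| ≤ K^{λ₁+λ₂}·|A|. -/

import Mathlib

open Finset Pointwise

private lemma card_union_le_of_subset_inter {α : Type*} [DecidableEq α] {U V I : Finset α}
    (hI : I ⊆ U ∩ V) : (U ∪ V).card + I.card ≤ U.card + V.card := by
  calc (U ∪ V).card + I.card ≤ (U ∪ V).card + (U ∩ V).card :=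
        Nat.add_le_add_left (card_le_card hI) _
    _ = U.card + V.card := card_union_add_card_inter U V

section
variable {G : Type*} [AddCommGroup G] [DecidableEq G]

theorem dilate_petridis (f : G → G)
    (hf : ∀ x y, f (x + y) = f x + f y) (A W : Finset G)
    (hW : ∀ W' ⊆ W, (A + W.image f).card * W'.card ≤ (A + W'.image f).card * W.card)
    (C : Finset G) :
    (C.image f + (A + W.image f)).card * W.card
      ≤ (A + W.image f).card * (W + C).card := by
  set M := A + W.image f with hM
  induction C using Finset.induction_on with
  | empty => simp
  | @insert x C hx ih =>
    set W' := W.filter (fun w => w + x ∈ W + C) with hW'def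
    have hW'W : W' ⊆ W := filter_subset _ _
    -- (b)
    have e1 : W + insert x C = W.image (· + x) ∪ (W + C) := by
      ext y
      simp only [mem_add, mem_insert, mem_union, mem_image]
      constructor
      · rintro ⟨w, hw, c, (rfl | hc), rfl⟩
        · exact Or.inl ⟨w, hw, rfl⟩
        · exact Or.inr ⟨w, hw, c, hc, rfl⟩
      · rintro (⟨w, hw, rfl⟩ | ⟨w, hw, c, hc, rfl⟩)
        · exact ⟨w, hw, x, Or.inl rfl, rfl⟩
        · exact ⟨w, hw, c, Or.inr hc, rfl⟩
    have e2 : W.image (· + x) ∩ (W + C) = W'.image (· + x) := by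
      ext y
      simp only [mem_inter, mem_image, hW'def, mem_filter]
      constructor
      · rintro ⟨⟨w, hw, rfl⟩, hy⟩
        exact ⟨w, ⟨hw, hy⟩, rfl⟩
      · rintro ⟨w, ⟨hw, hy⟩, rfl⟩
        exact ⟨⟨w, hw, rfl⟩, hy⟩
    have hb : (W + insert x C).card + W'.card = (W + C).card + W.card := by
      have h := card_union_add_card_inter (W.image (· + x)) (W + C)
      rw [e2, card_image_of_injective _ (add_left_injective x),
        card_image_of_injective _ (add_left_injective x)] at h
      rw [e1]
      omega
    -- (a)
    have e3 : (insert x C).image f + M = M.image (f x + ·) ∪ (C.image f + M) := by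
      rw [image_insert]
      ext y
      simp only [mem_add, mem_insert, mem_union, mem_image]
      constructor
      · rintro ⟨z, (rfl | hz), m, hm, rfl⟩
        · exact Or.inl ⟨m, hm, rfl⟩
        · exact Or.inr ⟨z, hz, m, hm, rfl⟩
      · rintro (⟨m, hm, rfl⟩ | ⟨z, hz, m, hm, rfl⟩)
        · exact ⟨f x, Or.inl rfl, m, hm, rfl⟩
        · exact ⟨z, Or.inr hz, m, hm, rfl⟩
    have hsub : (A + W'.image f).image (f x + ·) ⊆ M.image (f x + ·) ∩ (C.image f + M) := by
      intro y hy
      rw [mem_image] at hy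
      obtain ⟨m, hm, rfl⟩ := hy
      rw [mem_add] at hm
      obtain ⟨a, ha, z, hz, rfl⟩ := hm
      rw [mem_image] at hz
      obtain ⟨w', hw', rfl⟩ := hz
      rw [hW'def, mem_filter] at hw'
      obtain ⟨hw'W, hw'x⟩ := hw'
      rw [mem_inter]
      constructor
      · rw [mem_image]
        exact ⟨a + f w', by
          rw [hM, mem_add]
          exact ⟨a, ha, f w', mem_image_of_mem f hw'W, rfl⟩, rfl⟩
      · rw [mem_add] at hw'x
        obtain ⟨w, hw, c, hc, hwc⟩ := hw'x
        have key : f x + (a + f w') = f c + (a + f w) := by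
          have h1 : f w' + f x = f w + f c := by rw [← hf, ← hf, hwc]
          calc f x + (a + f w') = a + (f w' + f x) := by abel
            _ = a + (f w + f c) := by rw [h1]
            _ = f c + (a + f w) := by abel
        rw [key, mem_add]
        exact ⟨f c, mem_image_of_mem f hc, a + f w, by
          rw [hM, mem_add]; exact ⟨a, ha, f w, mem_image_of_mem f hw, rfl⟩, rfl⟩
    have ha : ((insert x C).image f + M).card + (A + W'.image f).card
        ≤ (C.image f + M).card + M.card := by
      have h := card_union_le_of_subset_inter hsub
      rw [card_image_of_injective _ (add_right_injective (f x)),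
        card_image_of_injective _ (add_right_injective (f x))] at h
      rw [e3]
      omega
    -- combine
    have hmin' := hW W' hW'W
    have step : ((insert x C).image f + M).card * W.card + (A + W'.image f).card * W.card
        ≤ M.card * (W + insert x C).card + (A + W'.image f).card * W.card := by
      calc ((insert x C).image f + M).card * W.card + (A + W'.image f).card * W.card
          = (((insert x C).image f + M).card + (A + W'.image f).card) * W.card := by ring
        _ ≤ ((C.image f + M).card + M.card) * W.card := Nat.mul_le_mul_right _ ha
        _ = (C.image f + M).card * W.card + M.card * W.card := by ring
        _ ≤ M.card * (W + C).card + M.card * W.card := Nat.add_le_add_right ih _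
        _ = M.card * ((W + C).card + W.card) := by ring
        _ = M.card * ((W + insert x C).card + W'.card) := by rw [hb]
        _ = M.card * (W + insert x C).card + M.card * W'.card := by ring
        _ ≤ M.card * (W + insert x C).card + (A + W'.image f).card * W.card :=
            Nat.add_le_add_left hmin' _
    exact Nat.le_of_add_le_add_right step

theorem dilate_triangle (f : G → G)
    (hf : ∀ x y, f (x + y) = f x + f y) (A B X : Finset G) (hX : X.Nonempty) :
    (A + B.image f).card * X.card ≤ (A + X.image f).card * (X + B).card := by
  obtain ⟨W, hWmem, hWmin⟩ := exists_min_image (X.powerset.erase ∅)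
      (fun Y => ((A + Y.image f).card : ℚ) / Y.card)
      ⟨X, mem_erase_of_ne_of_mem hX.ne_empty (mem_powerset_self X)⟩
  rw [mem_erase, mem_powerset, ← nonempty_iff_ne_empty] at hWmem
  obtain ⟨hWne, hWX⟩ := hWmem
  have hWpos : 0 < W.card := hWne.card_pos
  have cross : ∀ Y : Finset G, Y.Nonempty → Y ⊆ X →
      (A + W.image f).card * Y.card ≤ (A + Y.image f).card * W.card := by
    intro Y hYne hYX
    have h := hWmin Y (mem_erase_of_ne_of_mem hYne.ne_empty (mem_powerset.2 hYX))
    rw [div_le_div_iff₀ (by exact_mod_cast hWpos) (by exact_mod_cast hYne.card_pos)] at h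
    exact_mod_cast h
  have hyp : ∀ W' ⊆ W, (A + W.image f).card * W'.card ≤ (A + W'.image f).card * W.card := by
    intro W' hW'
    rcases W'.eq_empty_or_nonempty with rfl | hW'ne
    · simp
    · exact cross W' hW'ne (hW'.trans hWX)
  have h2 := dilate_petridis f hf A W hyp B
  have h1 : (A + B.image f).card ≤ (B.image f + (A + W.image f)).card := by
    have e : B.image f + (A + W.image f) = (A + B.image f) + W.image f := by
      rw [← add_assoc, add_comm (B.image f) A]
    rw [e]
    exact card_le_card_add_right ((hWne.image f).mono (by simp))
  have h3 := cross X hX (subset_refl X)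
  have h4 : (W + B).card ≤ (X + B).card := card_le_card (add_subset_add_right hWX)
  refine Nat.le_of_mul_le_mul_left ?_ hWpos
  calc W.card * ((A + B.image f).card * X.card)
      = ((A + B.image f).card * W.card) * X.card := by ring
    _ ≤ ((B.image f + (A + W.image f)).card * W.card) * X.card :=
        Nat.mul_le_mul_right _ (Nat.mul_le_mul_right _ h1)
    _ ≤ ((A + W.image f).card * (W + B).card) * X.card := Nat.mul_le_mul_right _ h2
    _ = ((A + W.image f).card * X.card) * (W + B).card := by ring
    _ ≤ ((A + X.image f).card * W.card) * (W + B).card := Nat.mul_le_mul_right _ h3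
    _ ≤ ((A + X.image f).card * W.card) * (X + B).card := Nat.mul_le_mul_left _ h4
    _ = W.card * ((A + X.image f).card * (X + B).card) := by ring

theorem claim1 (A X : Finset G) (hA : A.Nonempty)
    (hyp : ∀ X' ⊆ X, (X + A).card * X'.card ≤ (X' + A).card * X.card) :
    ∀ n : ℕ, (X + A.image (fun a => n • a)).card * X.card ^ n
      ≤ (X + A).card ^ n * X.card := by
  intro n
  induction n with
  | zero =>
    have h0 : X + A.image (fun a => (0 : ℕ) • a) = X := by
      have h1 : A.image (fun a => (0 : ℕ) • a) = {0} := by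
        simp only [zero_smul]
        exact image_const hA 0
      rw [h1, add_singleton]
      simp
    rw [h0]
    simp
  | succ n ih =>
    have hsub : X + A.image (fun a => (n + 1) • a) ⊆ X + A + A.image (fun a => n • a) := by
      intro y hy
      rw [mem_add] at hy
      obtain ⟨x, hx, z, hz, rfl⟩ := hy
      rw [mem_image] at hz
      obtain ⟨a, ha, rfl⟩ := hz
      rw [mem_add]
      refine ⟨x + a, add_mem_add hx ha, n • a, mem_image_of_mem _ ha, ?_⟩
      rw [succ_nsmul]
      abel
    have hp := pluennecke_petridis_inequality_add (A.image (fun a => n • a)) hyp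
    calc (X + A.image (fun a => (n + 1) • a)).card * X.card ^ (n + 1)
        = ((X + A.image (fun a => (n + 1) • a)).card * X.card) * X.card ^ n := by ring
      _ ≤ ((X + A + A.image (fun a => n • a)).card * X.card) * X.card ^ n :=
          Nat.mul_le_mul_right _ (Nat.mul_le_mul_right _ (card_le_card hsub))
      _ ≤ ((X + A).card * (X + A.image (fun a => n • a)).card) * X.card ^ n :=
          Nat.mul_le_mul_right _ (by rwa [add_comm _ X, add_right_comm X _ A] at hp)
      _ = (X + A).card * ((X + A.image (fun a => n • a)).card * X.card ^ n) := by ring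
      _ ≤ (X + A).card * ((X + A).card ^ n * X.card) := Nat.mul_le_mul_left _ ih
      _ = (X + A).card ^ (n + 1) * X.card := by ring

theorem claim2 (A X : Finset G) (hXA : X ⊆ A)
    (hyp : ∀ X' ⊆ X, (X + A).card * X'.card ≤ (X' + A).card * X.card) :
    ∀ n : ℕ, 1 ≤ n → (A + X.image (fun x => n • x)).card * X.card ^ n
      ≤ (X + A).card ^ n * X.card := by
  intro n hn
  induction n, hn using Nat.le_induction with
  | base =>
    have : X.image (fun x => (1 : ℕ) • x) = X := by
      simp only [one_smul]
      exact image_id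
    rw [this, add_comm A X]
    simp [mul_comm]
  | succ n hn ih =>
    have hsub : A + X.image (fun x => (n + 1) • x) ⊆ X + A + X.image (fun x => n • x) := by
      intro y hy
      rw [mem_add] at hy
      obtain ⟨a, ha, z, hz, rfl⟩ := hy
      rw [mem_image] at hz
      obtain ⟨x, hx, rfl⟩ := hz
      rw [mem_add]
      refine ⟨x + a, add_mem_add hx ha, n • x, mem_image_of_mem _ hx, ?_⟩
      rw [succ_nsmul]
      abel
    have hp := pluennecke_petridis_inequality_add (X.image (fun x => n • x)) hyp
    have hsub2 : (X + X.image (fun x => n • x)).card ≤ (A + X.image (fun x => n • x)).card :=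
      card_le_card (add_subset_add_right hXA)
    calc (A + X.image (fun x => (n + 1) • x)).card * X.card ^ (n + 1)
        = ((A + X.image (fun x => (n + 1) • x)).card * X.card) * X.card ^ n := by ring
      _ ≤ ((X + A + X.image (fun x => n • x)).card * X.card) * X.card ^ n :=
          Nat.mul_le_mul_right _ (Nat.mul_le_mul_right _ (card_le_card hsub))
      _ ≤ ((X + A).card * (X + X.image (fun x => n • x)).card) * X.card ^ n :=
          Nat.mul_le_mul_right _ (by rwa [add_comm _ X, add_right_comm X _ A] at hp)
      _ ≤ ((X + A).card * (A + X.image (fun x => n • x)).card) * X.card ^ n :=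
          Nat.mul_le_mul_right _ (Nat.mul_le_mul_left _ hsub2)
      _ = (X + A).card * ((A + X.image (fun x => n • x)).card * X.card ^ n) := by ring
      _ ≤ (X + A).card * ((X + A).card ^ n * X.card) := Nat.mul_le_mul_left _ ih
      _ = (X + A).card ^ (n + 1) * X.card := by ring

end

theorem dilate_sum_mul {G : Type*} [AddCommGroup G] [DecidableEq G]
    (A X : Finset G) (hA : A.Nonempty) (hXA : X ⊆ A) (hX : X.Nonempty)
    (K : ℝ) (hK : K = ((A + A).card : ℝ) / A.card)
    (hmin : ∀ Y ⊆ A, Y.Nonempty →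
      ((X + A).card : ℝ) / X.card ≤ ((Y + A).card : ℝ) / Y.card)
    (l₁ l₂ : ℕ) (hl₁ : 1 ≤ l₁) (hl₂ : 1 ≤ l₂) :
    ((A + A.image (fun a => (l₁ * l₂) • a)).card : ℝ)
        ≤ ((A + X.image (fun x => l₁ • x)).card : ℝ)
            * ((X + A.image (fun a => l₂ • a)).card : ℝ) / X.card
      ∧ ((A + X.image (fun x => l₁ • x)).card : ℝ)
            * ((X + A.image (fun a => l₂ • a)).card : ℝ) / X.card
        ≤ K ^ (l₁ + l₂) * A.card := by
  have hXpos : 0 < X.card := hX.card_pos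
  have hXposR : (0 : ℝ) < X.card := by exact_mod_cast hXpos
  have hApos : (0 : ℝ) < A.card := by exact_mod_cast hA.card_pos
  have hyp : ∀ X' ⊆ X, (X + A).card * X'.card ≤ (X' + A).card * X.card := by
    intro X' hX'
    rcases X'.eq_empty_or_nonempty with rfl | hX'ne
    · simp
    · have h := hmin X' (hX'.trans hXA) hX'ne
      rw [div_le_div_iff₀ hXposR (by exact_mod_cast hX'ne.card_pos)] at h
      exact_mod_cast h
  constructor
  · have h := dilate_triangle (fun a => l₁ • a) (fun x y => smul_add l₁ x y) A
      (A.image (fun a => l₂ • a)) X hX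
    have him : (A.image (fun a => l₂ • a)).image (fun a => l₁ • a)
        = A.image (fun a => (l₁ * l₂) • a) := by
      rw [image_image]
      apply image_congr
      intro a _
      simp only [Function.comp_apply]
      rw [mul_comm, mul_nsmul]
    rw [him] at h
    rw [le_div_iff₀ hXposR]
    exact_mod_cast h
  · set S : ℝ := ((X + A).card : ℝ) / X.card with hS
    have hSK : S ≤ K := by
      rw [hK]
      exact hmin A (subset_refl A) hA
    have hS0 : 0 ≤ S := by positivity
    have hXA' : (X.card : ℝ) ≤ A.card := by exact_mod_cast card_le_card hXA
    have f2 : ((A + X.image (fun x => l₁ • x)).card : ℝ) ≤ S ^ l₁ * X.card := by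
      have h := (Nat.cast_le (α := ℝ)).2 (claim2 A X hXA hyp l₁ hl₁)
      push_cast at h
      rw [hS, div_pow, div_mul_eq_mul_div, le_div_iff₀ (by positivity)]
      linarith
    have f1 : ((X + A.image (fun a => l₂ • a)).card : ℝ) ≤ S ^ l₂ * X.card := by
      have h := (Nat.cast_le (α := ℝ)).2 (claim1 A X hA hyp l₂)
      push_cast at h
      rw [hS, div_pow, div_mul_eq_mul_div, le_div_iff₀ (by positivity)]
      linarith
    calc ((A + X.image (fun x => l₁ • x)).card : ℝ)
            * ((X + A.image (fun a => l₂ • a)).card : ℝ) / X.card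
        ≤ (S ^ l₁ * X.card) * (S ^ l₂ * X.card) / X.card := by
          gcongr
      _ = S ^ (l₁ + l₂) * X.card := by
          field_simp
          ring
      _ ≤ K ^ (l₁ + l₂) * A.card := by
          have hK0 : 0 ≤ K := le_trans hS0 hSK
          exact mul_le_mul (pow_le_pow_left₀ hS0 hSK _) hXA' (le_of_lt hXposR) (by positivity)
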